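/- Let s > 1/2 and l be real parameters, and consider the ODE r(r-2)P''(r) + (sr² - 4rs + 2r - 2)P'(r) + (-rs(2s-1) - l(l+1) - 2s)P(r) = 0. Suppose a formal power series P(r) = Σₙ Pₙrⁿ solves the equation; then its coefficients satisfy the three-term recurrence s(n-2s)P_{n-1} + (n² + n - 4sn - l(l+1) - 2s)Pₙ - 2(n+1)²P_{n+1} = 0 (with P₋₁ = 0). In particular, if the series terminates to a polynomial of degree 2s-1 (with 2s an integer ≥ 2), then P_{2s-1}/P_{2s-2} = -s/(l(l+1)+4s²). -/

import Mathlib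

open PowerSeries in
/-- Family S3 (scalar perturbations): a formal power series solution of the ODE has
coefficients satisfying the three-term recurrence, and if it terminates to a polynomial of
degree `2s-1` then the ratio of the two top coefficients is `-s/(l(l+1)+4s²)`. -/
theorem stmt_6 (s l : ℝ) (hs : 1 / 2 < s) (N : ℕ) (hN2 : 2 ≤ N) (hN : (N : ℝ) = 2 * s)
    (P : ℕ → ℝ)
    (hode :
      (X * (X - C 2)) * derivativeFun (derivativeFun (mk P)) +
        (C s * X ^ 2 - C (4 * s) * X + C 2 * X - C 2) * derivativeFun (mk P) +
        (-(C (s * (2 * s - 1))) * X - C (l * (l + 1)) - C (2 * s)) * mk P = 0) :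
    (∀ n : ℕ,
      s * ((n : ℝ) - 2 * s) * (if n = 0 then 0 else P (n - 1)) +
        ((n : ℝ) ^ 2 + (n : ℝ) - 4 * s * (n : ℝ) - l * (l + 1) - 2 * s) * P n -
        2 * ((n : ℝ) + 1) ^ 2 * P (n + 1) = 0) ∧
    ((∀ n : ℕ, N ≤ n → P n = 0) → P (N - 1) ≠ 0 →
      P (N - 1) / P (N - 2) = -s / (l * (l + 1) + 4 * s ^ 2)) := by
  set F : ℝ⟦X⟧ := mk P with hF
  set D1 := derivativeFun F with hD1
  set D2 := derivativeFun D1 with hD2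
  have hode' : X * (X * D2) - C 2 * (X * D2) + C s * (X * (X * D1))
      - C (4 * s) * (X * D1) + C 2 * (X * D1) - C 2 * D1
      - C (s * (2 * s - 1)) * (X * F) - C (l * (l + 1)) * F - C (2 * s) * F = 0 := by
    rw [← hode]; ring
  have key : ∀ n : ℕ,
      s * ((n : ℝ) - 2 * s) * (if n = 0 then 0 else P (n - 1)) +
        ((n : ℝ) ^ 2 + (n : ℝ) - 4 * s * (n : ℝ) - l * (l + 1) - 2 * s) * P n -
        2 * ((n : ℝ) + 1) ^ 2 * P (n + 1) = 0 := by
    intro n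
    have hdf : ∀ f : ℝ⟦X⟧, derivativeFun f = derivative ℝ f := fun f => rfl
    have h := congrArg (coeff n) hode'
    rcases n with _ | _ | k
    · simp only [map_sub, map_add, coeff_C_mul, coeff_zero_X_mul, hD1, hD2, hF,
        hdf, coeff_derivativeFun, coeff_mk, map_zero, mul_zero] at h
      simp only [if_pos rfl]
      push_cast at h ⊢
      linear_combination h
    · simp only [map_sub, map_add, coeff_C_mul, coeff_succ_X_mul, coeff_zero_X_mul, hD1, hD2, hF,
        hdf, coeff_derivativeFun, coeff_mk, map_zero, mul_zero] at h
      simp only [Nat.succ_ne_zero, if_neg, reduceIte]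
      push_cast at h ⊢
      linear_combination h
    · simp only [map_sub, map_add, coeff_C_mul, coeff_succ_X_mul, coeff_zero_X_mul, hD1, hD2, hF,
        hdf, coeff_derivativeFun, coeff_mk, map_zero, mul_zero] at h
      simp only [Nat.succ_ne_zero, if_neg, reduceIte]
      push_cast at h ⊢
      linear_combination h
  refine ⟨key, fun hz hne => ?_⟩
  obtain ⟨m, rfl⟩ : ∃ m, N = m + 2 := ⟨N - 2, by omega⟩
  have h1 := key (m + 1)
  have hPN : P (m + 2) = 0 := hz _ le_rfl
  simp only [Nat.succ_ne_zero, if_neg, reduceIte, Nat.add_sub_cancel] at h1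
  push_cast at h1 hN
  have hm1 : m + 2 - 1 = m + 1 := by omega
  have hm2 : m + 2 - 2 = m := by omega
  rw [hm1, hm2]
  have heq : -s * P m - (l * (l + 1) + 4 * s ^ 2) * P (m + 1) = 0 := by
    rw [show m + 1 + 1 = m + 2 by ring, hPN] at h1
    linear_combination h1 + (-s * P m + (2 * s - (m : ℝ) - 1) * P (m + 1)) * hN
  by_cases hd : l * (l + 1) + 4 * s ^ 2 = 0
  · have hPm0 : P m = 0 := by
      have hs0 : s ≠ 0 := by linarith
      have h2 : s * P m = 0 := by rw [hd] at heq; linarith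
      exact (mul_eq_zero.mp h2).resolve_left hs0
    rw [hPm0, hd]
    simp
  · have hPm : P m ≠ 0 := by
      intro h0
      apply hne
      rw [hm1]
      have h2 : (l * (l + 1) + 4 * s ^ 2) * P (m + 1) = 0 := by rw [h0] at heq; linarith
      exact (mul_eq_zero.mp h2).resolve_left hd
    rw [hm1] at hne
    rw [div_eq_div_iff hPm hd]
    linear_combination -heq
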